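/- Let d ≥ 1, 1 ≤ q < ∞, let Ω ⊆ ℝ^d be open, and let p : Ω → (0,∞) be continuously differentiable with M := sup_{x∈Ω} |∇(log p)(x)| < ∞. Let γ : ℝ^d → ℝ be smooth and compactly supported with support contained in the closed unit ball B(0,1). Fix x₀ ∈ ℝ^d and r > 0 with B(x₀, r) ⊆ Ω, and define u(x) = γ((x−x₀)/r) · p(x)^{−1/q} for x ∈ Ω. Then: (a) ( ∫_Ω |u|^q p dx )^{1/q} = r^{d/q} ( ∫_{B(0,1)} |γ(y)|^q dy )^{1/q}; and (b) ( ∫_Ω |∇u|^q p dx )^{1/q} ≤ r^{−1+d/q} ( ∫_{B(0,1)} |∇γ(y)|^q dy )^{1/q} + (r^{d/q}/q) · M · ( ∫_{B(0,1)} |γ(y)|^q dy )^{1/q}. -/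

import Mathlib

open MeasureTheory

section Aux

lemma stmt11_norm_grad {E : Type*} [NormedAddCommGroup E] [InnerProductSpace ℝ E]
    [CompleteSpace E] (f : E → ℝ) (x : E) : ‖gradient f x‖ = ‖fderiv ℝ f x‖ := by
  unfold gradient; exact LinearIsometryEquiv.norm_map _ _

lemma stmt11_cov {d : ℕ} (f : EuclideanSpace ℝ (Fin d) → ℝ)
    (h0 : ∀ z : EuclideanSpace ℝ (Fin d), z ∉ Metric.closedBall (0 : EuclideanSpace ℝ (Fin d)) 1 → f z = 0)
    (Ω : Set (EuclideanSpace ℝ (Fin d))) (hΩ : IsOpen Ω)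
    (x₀ : EuclideanSpace ℝ (Fin d)) (r : ℝ) (hr : 0 < r)
    (hball : Metric.ball x₀ r ⊆ Ω) :
    ∫ x in Ω, f (r⁻¹ • (x - x₀)) = r ^ d * ∫ z in Metric.ball (0 : EuclideanSpace ℝ (Fin d)) 1, f z := by
  have hg0 : ∀ x : EuclideanSpace ℝ (Fin d), x ∉ Metric.closedBall x₀ r → f (r⁻¹ • (x - x₀)) = 0 := by
    intro x hx
    apply h0
    simp only [Metric.mem_closedBall, not_le, dist_eq_norm] at hx ⊢
    rw [sub_zero, norm_smul, norm_inv, Real.norm_eq_abs, abs_of_pos hr]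
    rw [lt_inv_mul_iff₀ hr, mul_one]
    exact hx
  have hsph : (volume : Measure (EuclideanSpace ℝ (Fin d))) (Metric.sphere x₀ r) = 0 :=
    Measure.addHaar_sphere_of_ne_zero _ _ hr.ne'
  have step1 : ∫ x in Ω, f (r⁻¹ • (x - x₀)) = ∫ x, f (r⁻¹ • (x - x₀)) := by
    rw [← integral_indicator hΩ.measurableSet]
    refine integral_congr_ae ?_
    have : ∀ᵐ x : EuclideanSpace ℝ (Fin d), x ∉ Metric.sphere x₀ r := by
      rw [ae_iff]; simpa [Metric.sphere, dist_eq_norm] using hsph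
    filter_upwards [this] with x hx
    by_cases hxΩ : x ∈ Ω
    · simp [Set.indicator_of_mem hxΩ]
    · rw [Set.indicator_of_notMem hxΩ]
      refine (hg0 x ?_).symm
      intro hcb
      rcases lt_or_eq_of_le (Metric.mem_closedBall.mp hcb) with h | h
      · exact hxΩ (hball (Metric.mem_ball.mpr h))
      · exact hx (by simpa [Metric.mem_sphere, dist_eq_norm] using h)
  have step3 : ∫ z in Metric.ball (0 : EuclideanSpace ℝ (Fin d)) 1, f z = ∫ z, f z := by
    rw [← integral_indicator Metric.isOpen_ball.measurableSet]
    refine integral_congr_ae ?_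
    have hsph1 : (volume : Measure (EuclideanSpace ℝ (Fin d))) (Metric.sphere (0 : EuclideanSpace ℝ (Fin d)) 1) = 0 :=
      Measure.addHaar_sphere_of_ne_zero _ _ one_ne_zero
    have : ∀ᵐ z : EuclideanSpace ℝ (Fin d), z ∉ Metric.sphere (0 : EuclideanSpace ℝ (Fin d)) 1 := by
      rw [ae_iff]; simpa [Metric.sphere, dist_eq_norm] using hsph1
    filter_upwards [this] with z hz
    by_cases hzb : z ∈ Metric.ball (0 : EuclideanSpace ℝ (Fin d)) 1
    · simp [Set.indicator_of_mem hzb]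
    · rw [Set.indicator_of_notMem hzb]
      refine (h0 z ?_).symm
      intro hcb
      rcases lt_or_eq_of_le (Metric.mem_closedBall.mp hcb) with h | h
      · exact hzb (Metric.mem_ball.mpr h)
      · exact hz (by simpa [Metric.mem_sphere] using h)
  rw [step1, step3]
  have step2 : ∫ x, f (r⁻¹ • (x - x₀)) = ∫ x, f (r⁻¹ • x) :=
    integral_sub_right_eq_self (fun x => f (r⁻¹ • x)) x₀
  rw [step2, Measure.integral_comp_smul volume f r⁻¹]
  rw [finrank_euclideanSpace_fin, smul_eq_mul]
  congr 1
  rw [abs_of_pos (by positivity)]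
  rw [← inv_pow, inv_inv]

lemma stmt11_minkowski {α : Type*} [MeasurableSpace α] (μ : Measure α) {q : ℝ} (hq : 1 ≤ q)
    (f g : α → ℝ) (hf0 : ∀ x, 0 ≤ f x) (hg0 : ∀ x, 0 ≤ g x)
    (hfm : AEMeasurable f μ) (hgm : AEMeasurable g μ)
    (hfi : Integrable (fun x => f x ^ q) μ) (hgi : Integrable (fun x => g x ^ q) μ)
    (hfgi : Integrable (fun x => (f x + g x) ^ q) μ) :
    (∫ x, (f x + g x) ^ q ∂μ) ^ (1/q)
      ≤ (∫ x, f x ^ q ∂μ) ^ (1/q) + (∫ x, g x ^ q ∂μ) ^ (1/q) := by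
  have hq0 : (0:ℝ) < q := lt_of_lt_of_le one_pos hq
  set F : α → ENNReal := fun x => ENNReal.ofReal (f x) with hF
  set G : α → ENNReal := fun x => ENNReal.ofReal (g x) with hG
  have h1 : ∫ x, (f x + g x) ^ q ∂μ = (∫⁻ x, (F x + G x) ^ q ∂μ).toReal := by
    rw [integral_eq_lintegral_of_nonneg_ae
      (Filter.Eventually.of_forall fun x => Real.rpow_nonneg (add_nonneg (hf0 x) (hg0 x)) q)
      hfgi.aestronglyMeasurable]
    congr 1
    refine lintegral_congr fun x => ?_
    rw [← ENNReal.ofReal_rpow_of_nonneg (add_nonneg (hf0 x) (hg0 x)) hq0.le,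
      ENNReal.ofReal_add (hf0 x) (hg0 x)]
  have h2 : ∫⁻ x, F x ^ q ∂μ = ENNReal.ofReal (∫ x, f x ^ q ∂μ) := by
    rw [ofReal_integral_eq_lintegral_ofReal hfi
      (Filter.Eventually.of_forall fun x => Real.rpow_nonneg (hf0 x) q)]
    exact lintegral_congr fun x => ENNReal.ofReal_rpow_of_nonneg (hf0 x) hq0.le
  have h3 : ∫⁻ x, G x ^ q ∂μ = ENNReal.ofReal (∫ x, g x ^ q ∂μ) := by
    rw [ofReal_integral_eq_lintegral_ofReal hgi
      (Filter.Eventually.of_forall fun x => Real.rpow_nonneg (hg0 x) q)]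
    exact lintegral_congr fun x => ENNReal.ofReal_rpow_of_nonneg (hg0 x) hq0.le
  have key : (∫⁻ x, (F x + G x) ^ q ∂μ) ^ (1/q)
      ≤ (∫⁻ x, F x ^ q ∂μ) ^ (1/q) + (∫⁻ x, G x ^ q ∂μ) ^ (1/q) := by
    simpa using ENNReal.lintegral_Lp_add_le hfm.ennreal_ofReal hgm.ennreal_ofReal hq
  have hFfin : (∫⁻ x, F x ^ q ∂μ) ^ (1/q) ≠ ⊤ := by
    rw [h2]; exact ENNReal.rpow_ne_top_of_nonneg (by positivity) ENNReal.ofReal_ne_top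
  have hGfin : (∫⁻ x, G x ^ q ∂μ) ^ (1/q) ≠ ⊤ := by
    rw [h3]; exact ENNReal.rpow_ne_top_of_nonneg (by positivity) ENNReal.ofReal_ne_top
  have hsum : (∫⁻ x, F x ^ q ∂μ) ^ (1/q) + (∫⁻ x, G x ^ q ∂μ) ^ (1/q) ≠ ⊤ := by
    rw [← lt_top_iff_ne_top]
    exact ENNReal.add_lt_top.mpr ⟨lt_top_iff_ne_top.mpr hFfin, lt_top_iff_ne_top.mpr hGfin⟩
  have e2 : (∫ x, f x ^ q ∂μ) ^ (1/q) = ((∫⁻ x, F x ^ q ∂μ) ^ (1/q)).toReal := by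
    rw [h2, ← ENNReal.toReal_rpow, ENNReal.toReal_ofReal
      (integral_nonneg fun x => Real.rpow_nonneg (hf0 x) q)]
  have e3 : (∫ x, g x ^ q ∂μ) ^ (1/q) = ((∫⁻ x, G x ^ q ∂μ) ^ (1/q)).toReal := by
    rw [h3, ← ENNReal.toReal_rpow, ENNReal.toReal_ofReal
      (integral_nonneg fun x => Real.rpow_nonneg (hg0 x) q)]
  rw [h1, e2, e3, ← ENNReal.toReal_add hFfin hGfin, ENNReal.toReal_rpow]
  exact ENNReal.toReal_mono hsum key

end Aux

set_option maxHeartbeats 1600000 in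
/-- equations (54)–(55) of the paper: the weighted norms of the
test functions `u = γ((x−x₀)/r) p^{−1/q}`.
(a) `(∫_Ω |u|^q p)^{1/q} = r^{d/q} (∫_{B(0,1)} |γ|^q)^{1/q}`;
(b) `(∫_Ω |∇u|^q p)^{1/q} ≤ r^{−1+d/q} (∫_{B(0,1)} |∇γ|^q)^{1/q}
      + (r^{d/q}/q) M (∫_{B(0,1)} |γ|^q)^{1/q}`,
where `M` bounds `‖∇(log p)‖` on `Ω`. -/
theorem stmt11 {d : ℕ} (hd : 1 ≤ d) (q : ℝ) (hq : 1 ≤ q)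
    (Ω : Set (EuclideanSpace ℝ (Fin d))) (hΩ : IsOpen Ω)
    (p : EuclideanSpace ℝ (Fin d) → ℝ) (hpC : ContDiffOn ℝ 1 p Ω)
    (hppos : ∀ x ∈ Ω, 0 < p x)
    (M : ℝ) (hM : ∀ x ∈ Ω, ‖gradient (fun y => Real.log (p y)) x‖ ≤ M)
    (γ : EuclideanSpace ℝ (Fin d) → ℝ) (hγ : ContDiff ℝ (⊤ : ℕ∞) γ)
    (hγsupp : tsupport γ ⊆ Metric.closedBall 0 1) (hγc : HasCompactSupport γ)
    (x₀ : EuclideanSpace ℝ (Fin d)) (r : ℝ) (hr : 0 < r)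
    (hball : Metric.ball x₀ r ⊆ Ω)
    (u : EuclideanSpace ℝ (Fin d) → ℝ)
    (hu : ∀ x, u x = γ (r⁻¹ • (x - x₀)) * (p x) ^ (-(1 / q))) :
    (∫ x in Ω, |u x| ^ q * p x) ^ (1 / q)
        = r ^ ((d : ℝ) / q)
            * (∫ y in Metric.ball (0 : EuclideanSpace ℝ (Fin d)) 1, |γ y| ^ q) ^ (1 / q)
      ∧ (∫ x in Ω, ‖gradient u x‖ ^ q * p x) ^ (1 / q)
        ≤ r ^ (-1 + (d : ℝ) / q)
            * (∫ y in Metric.ball (0 : EuclideanSpace ℝ (Fin d)) 1, ‖gradient γ y‖ ^ q) ^ (1 / q)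
          + (r ^ ((d : ℝ) / q) / q) * M
            * (∫ y in Metric.ball (0 : EuclideanSpace ℝ (Fin d)) 1, |γ y| ^ q) ^ (1 / q) := by
  have hq0 : (0:ℝ) < q := lt_of_lt_of_le one_pos hq
  have hq0' : q ≠ 0 := hq0.ne'
  have hM0 : 0 ≤ M := le_trans (norm_nonneg _) (hM x₀ (hball (Metric.mem_ball_self hr)))
  have hγ0 : ∀ z : EuclideanSpace ℝ (Fin d), z ∉ Metric.closedBall (0:EuclideanSpace ℝ (Fin d)) 1 → γ z = 0 :=
    fun z hz => image_eq_zero_of_notMem_tsupport (fun h => hz (hγsupp h))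
  have hrd_pow : ((r:ℝ) ^ d) ^ (1/q) = r ^ ((d:ℝ)/q) := by
    rw [← Real.rpow_natCast r d, ← Real.rpow_mul hr.le, mul_one_div]
  -- ======= Part (a) =======
  have hA0 : 0 ≤ ∫ z in Metric.ball (0 : EuclideanSpace ℝ (Fin d)) 1, |γ z| ^ q :=
    setIntegral_nonneg Metric.isOpen_ball.measurableSet
      (fun z _ => Real.rpow_nonneg (abs_nonneg _) q)
  have parta : (∫ x in Ω, |u x| ^ q * p x) ^ (1 / q)
      = r ^ ((d : ℝ) / q)
        * (∫ y in Metric.ball (0 : EuclideanSpace ℝ (Fin d)) 1, |γ y| ^ q) ^ (1 / q) := by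
    have ha1 : ∫ x in Ω, |u x| ^ q * p x
        = ∫ x in Ω, (fun z => |γ z| ^ q) (r⁻¹ • (x - x₀)) := by
      refine setIntegral_congr_fun hΩ.measurableSet fun x hx => ?_
      have hp := hppos x hx
      have hrp : (0:ℝ) < p x ^ (-(1/q)) := Real.rpow_pos_of_pos hp _
      have hpow : (p x ^ (-(1/q))) ^ q = (p x)⁻¹ := by
        rw [← Real.rpow_mul hp.le, neg_mul, one_div, inv_mul_cancel₀ hq0',
          Real.rpow_neg_one]
      rw [hu x, abs_mul, abs_of_pos hrp, Real.mul_rpow (abs_nonneg _) hrp.le, hpow,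
        mul_assoc, inv_mul_cancel₀ hp.ne', mul_one]
    rw [ha1, stmt11_cov (fun z => |γ z| ^ q)
      (fun z hz => by show |γ z| ^ q = 0; rw [hγ0 z hz, abs_zero, Real.zero_rpow hq0']) Ω hΩ x₀ r hr hball,
      Real.mul_rpow (by positivity) hA0, hrd_pow]
  refine ⟨parta, ?_⟩
  -- ======= Part (b) =======
  set y : EuclideanSpace ℝ (Fin d) → EuclideanSpace ℝ (Fin d) := fun x => r⁻¹ • (x - x₀) with hy
  set A : EuclideanSpace ℝ (Fin d) → ℝ := fun x => r⁻¹ * ‖gradient γ (y x)‖ with hA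
  set B : EuclideanSpace ℝ (Fin d) → ℝ := fun x => (M/q) * |γ (y x)| with hB
  have hA0' : ∀ x, 0 ≤ A x := fun x => mul_nonneg (by positivity) (norm_nonneg _)
  have hB0' : ∀ x, 0 ≤ B x := fun x => mul_nonneg (by positivity) (abs_nonneg _)
  have hgradγ_cont : Continuous (gradient γ) := by
    have h1 : Continuous (fderiv ℝ γ) := hγ.continuous_fderiv (by simp)
    exact (InnerProductSpace.toDual ℝ (EuclideanSpace ℝ (Fin d))).symm.continuous.comp h1
  have hgradγ0 : ∀ z : EuclideanSpace ℝ (Fin d), z ∉ Metric.closedBall (0:EuclideanSpace ℝ (Fin d)) 1 → gradient γ z = 0 := by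
    intro z hz
    have hfd : fderiv ℝ γ z = 0 := by
      by_contra h
      exact hz (hγsupp (support_fderiv_subset ℝ (Function.mem_support.mpr h)))
    show (InnerProductSpace.toDual ℝ (EuclideanSpace ℝ (Fin d))).symm (fderiv ℝ γ z) = 0
    rw [hfd, map_zero]
  have hy_cont : Continuous y := (continuous_id.sub continuous_const).const_smul r⁻¹
  have hyout : ∀ x : EuclideanSpace ℝ (Fin d), x ∉ Metric.closedBall x₀ r → y x ∉ Metric.closedBall (0:EuclideanSpace ℝ (Fin d)) 1 := by
    intro x hx
    simp only [Metric.mem_closedBall, not_le, dist_eq_norm] at hx ⊢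
    rw [hy]
    simp only
    rw [sub_zero, norm_smul, norm_inv, Real.norm_eq_abs, abs_of_pos hr,
      lt_inv_mul_iff₀ hr, mul_one]
    exact hx
  have hA_cont : Continuous A := continuous_const.mul ((hgradγ_cont.comp hy_cont).norm)
  have hB_cont : Continuous B := continuous_const.mul ((hγ.continuous.comp hy_cont).abs)
  have hAsupp : ∀ x : EuclideanSpace ℝ (Fin d), x ∉ Metric.closedBall x₀ r → A x = 0 := by
    intro x hx; rw [hA]; simp only; rw [hgradγ0 _ (hyout x hx), norm_zero, mul_zero]
  have hBsupp : ∀ x : EuclideanSpace ℝ (Fin d), x ∉ Metric.closedBall x₀ r → B x = 0 := by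
    intro x hx; rw [hB]; simp only; rw [hγ0 _ (hyout x hx), abs_zero, mul_zero]
  -- integrability
  have hAq_int : Integrable (fun x => A x ^ q) (volume.restrict Ω) := by
    refine (Continuous.integrable_of_hasCompactSupport
      (hA_cont.rpow_const fun x => Or.inr hq0.le)
      (HasCompactSupport.intro (isCompact_closedBall x₀ r)
        (fun x hx => by rw [hAsupp x hx, Real.zero_rpow hq0']))).restrict
  have hBq_int : Integrable (fun x => B x ^ q) (volume.restrict Ω) := by
    refine (Continuous.integrable_of_hasCompactSupport
      (hB_cont.rpow_const fun x => Or.inr hq0.le)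
      (HasCompactSupport.intro (isCompact_closedBall x₀ r)
        (fun x hx => by rw [hBsupp x hx, Real.zero_rpow hq0']))).restrict
  have hABq_int : Integrable (fun x => (A x + B x) ^ q) (volume.restrict Ω) := by
    refine (Continuous.integrable_of_hasCompactSupport
      ((hA_cont.add hB_cont).rpow_const fun x => Or.inr hq0.le)
      (HasCompactSupport.intro (isCompact_closedBall x₀ r)
        (fun x hx => by rw [Pi.add_apply, hAsupp x hx, hBsupp x hx, add_zero, Real.zero_rpow hq0']))).restrict
  -- pointwise bound
  have key : ∀ x ∈ Ω, ‖gradient u x‖ ^ q * p x ≤ (A x + B x) ^ q := by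
    intro x hx
    have hp := hppos x hx
    have hyd : HasFDerivAt y (r⁻¹ • ContinuousLinearMap.id ℝ (EuclideanSpace ℝ (Fin d))) x := by
      have : HasFDerivAt (fun x : EuclideanSpace ℝ (Fin d) => x - x₀) (ContinuousLinearMap.id ℝ (EuclideanSpace ℝ (Fin d))) x :=
        (hasFDerivAt_id x).sub_const x₀
      exact this.const_smul r⁻¹
    have hγd : HasFDerivAt (fun x => γ (y x))
        ((fderiv ℝ γ (y x)).comp (r⁻¹ • ContinuousLinearMap.id ℝ (EuclideanSpace ℝ (Fin d)))) x :=
      ((hγ.differentiable (by simp) (y x)).hasFDerivAt).comp x hyd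
    have hpd : HasFDerivAt p (fderiv ℝ p x) x :=
      (((hpC.differentiableOn one_ne_zero).differentiableAt (hΩ.mem_nhds hx))).hasFDerivAt
    have hwd : HasFDerivAt (fun x => p x ^ (-(1/q)))
        ((-(1/q) * p x ^ (-(1/q) - 1)) • fderiv ℝ p x) x :=
      hpd.rpow_const (Or.inl hp.ne')
    have hud : HasFDerivAt u
        (γ (y x) • ((-(1/q) * p x ^ (-(1/q) - 1)) • fderiv ℝ p x)
          + (p x ^ (-(1/q))) • ((fderiv ℝ γ (y x)).comp (r⁻¹ • ContinuousLinearMap.id ℝ (EuclideanSpace ℝ (Fin d))))) x := by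
      have hueq : u = fun x => γ (y x) * p x ^ (-(1/q)) := funext hu
      rw [hueq]
      exact hγd.mul hwd
    -- norm of fderiv p bounded
    have hlogd : HasFDerivAt (fun z => Real.log (p z)) ((p x)⁻¹ • fderiv ℝ p x) x :=
      hpd.log hp.ne'
    have hplog : ‖fderiv ℝ p x‖ ≤ p x * M := by
      have h1 : ‖gradient (fun z => Real.log (p z)) x‖ = (p x)⁻¹ * ‖fderiv ℝ p x‖ := by
        rw [stmt11_norm_grad, hlogd.fderiv, norm_smul, norm_inv, Real.norm_eq_abs,
          abs_of_pos hp]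
      have h2 := hM x hx
      rw [h1] at h2
      calc ‖fderiv ℝ p x‖ = p x * ((p x)⁻¹ * ‖fderiv ℝ p x‖) := by
            field_simp
        _ ≤ p x * M := by
            exact mul_le_mul_of_nonneg_left h2 hp.le
    -- norm of composed map
    have hcomp : (fderiv ℝ γ (y x)).comp (r⁻¹ • ContinuousLinearMap.id ℝ (EuclideanSpace ℝ (Fin d)))
        = r⁻¹ • fderiv ℝ γ (y x) := by
      ext v
      simp [ContinuousLinearMap.smul_apply, _root_.map_smul]
    have hrp : (0:ℝ) < p x ^ (-(1/q)) := Real.rpow_pos_of_pos hp _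
    have hbound : ‖gradient u x‖ ≤ p x ^ (-(1/q)) * (A x + B x) := by
      rw [stmt11_norm_grad, hud.fderiv]
      calc ‖γ (y x) • ((-(1/q) * p x ^ (-(1/q) - 1)) • fderiv ℝ p x)
            + (p x ^ (-(1/q))) • ((fderiv ℝ γ (y x)).comp (r⁻¹ • ContinuousLinearMap.id ℝ (EuclideanSpace ℝ (Fin d))))‖
          ≤ ‖γ (y x) • ((-(1/q) * p x ^ (-(1/q) - 1)) • fderiv ℝ p x)‖
            + ‖(p x ^ (-(1/q))) • ((fderiv ℝ γ (y x)).comp (r⁻¹ • ContinuousLinearMap.id ℝ (EuclideanSpace ℝ (Fin d))))‖ :=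
            norm_add_le _ _
        _ = |γ (y x)| * (|(-(1/q)) * p x ^ (-(1/q) - 1)| * ‖fderiv ℝ p x‖)
            + p x ^ (-(1/q)) * (r⁻¹ * ‖fderiv ℝ γ (y x)‖) := by
            rw [hcomp]
            rw [norm_smul (γ (y x)) ((-(1/q) * p x ^ (-(1/q) - 1)) • fderiv ℝ p x),
              norm_smul (-(1/q) * p x ^ (-(1/q) - 1)) (fderiv ℝ p x),
              norm_smul (p x ^ (-(1/q))) (r⁻¹ • fderiv ℝ γ (y x)),
              norm_smul r⁻¹ (fderiv ℝ γ (y x))]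
            simp only [Real.norm_eq_abs]
            rw [abs_of_pos hrp, abs_of_pos (by positivity : (0:ℝ) < r⁻¹)]
        _ ≤ |γ (y x)| * ((1/q) * p x ^ (-(1/q) - 1) * (p x * M))
            + p x ^ (-(1/q)) * (r⁻¹ * ‖fderiv ℝ γ (y x)‖) := by
            refine add_le_add (mul_le_mul_of_nonneg_left ?_ (abs_nonneg _)) le_rfl
            rw [abs_mul, abs_neg, abs_of_pos (by positivity : (0:ℝ) < 1/q),
              abs_of_pos (Real.rpow_pos_of_pos hp _)]
            exact mul_le_mul_of_nonneg_left hplog (by positivity)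
        _ = p x ^ (-(1/q)) * (A x + B x) := by
            simp only [hA, hB, stmt11_norm_grad γ (y x)]
            rw [Real.rpow_sub hp, Real.rpow_one]
            field_simp
            ring
    calc ‖gradient u x‖ ^ q * p x ≤ (p x ^ (-(1/q)) * (A x + B x)) ^ q * p x := by
          exact mul_le_mul_of_nonneg_right
            (Real.rpow_le_rpow (norm_nonneg _) hbound hq0.le) hp.le
      _ = (A x + B x) ^ q := by
          rw [Real.mul_rpow hrp.le (add_nonneg (hA0' x) (hB0' x))]
          have hpow : (p x ^ (-(1/q))) ^ q = (p x)⁻¹ := by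
            rw [← Real.rpow_mul hp.le, neg_mul, one_div, inv_mul_cancel₀ hq0',
              Real.rpow_neg_one]
          rw [hpow, mul_comm ((p x)⁻¹) _, mul_assoc, inv_mul_cancel₀ hp.ne', mul_one]
  -- chain of inequalities
  have hb1 : ∫ x in Ω, ‖gradient u x‖ ^ q * p x ≤ ∫ x in Ω, (A x + B x) ^ q := by
    refine integral_mono_of_nonneg ?_ hABq_int ?_
    · filter_upwards [ae_restrict_mem hΩ.measurableSet] with x hx
      exact mul_nonneg (Real.rpow_nonneg (norm_nonneg _) q) (hppos x hx).le
    · filter_upwards [ae_restrict_mem hΩ.measurableSet] with x hx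
      exact key x hx
  have hb2 : (∫ x in Ω, ‖gradient u x‖ ^ q * p x) ^ (1/q)
      ≤ (∫ x in Ω, (A x + B x) ^ q) ^ (1/q) :=
    Real.rpow_le_rpow (setIntegral_nonneg hΩ.measurableSet fun x hx =>
      mul_nonneg (Real.rpow_nonneg (norm_nonneg _) q) (hppos x hx).le) hb1 (by positivity)
  have hb3 : (∫ x in Ω, (A x + B x) ^ q) ^ (1/q)
      ≤ (∫ x in Ω, A x ^ q) ^ (1/q) + (∫ x in Ω, B x ^ q) ^ (1/q) :=
    stmt11_minkowski (volume.restrict Ω) hq A B hA0' hB0'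
      hA_cont.aemeasurable hB_cont.aemeasurable hAq_int hBq_int hABq_int
  -- compute the two integrals
  have hC0 : 0 ≤ ∫ z in Metric.ball (0 : EuclideanSpace ℝ (Fin d)) 1, ‖gradient γ z‖ ^ q :=
    setIntegral_nonneg Metric.isOpen_ball.measurableSet
      (fun z _ => Real.rpow_nonneg (norm_nonneg _) q)
  have hAeq : (∫ x in Ω, A x ^ q) ^ (1/q)
      = r ^ (-1 + (d:ℝ)/q) * (∫ z in Metric.ball (0:EuclideanSpace ℝ (Fin d)) 1, ‖gradient γ z‖ ^ q) ^ (1/q) := by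
    have e1 : ∫ x in Ω, A x ^ q
        = r⁻¹ ^ q * ∫ x in Ω, (fun z => ‖gradient γ z‖ ^ q) (r⁻¹ • (x - x₀)) := by
      rw [← integral_const_mul]
      refine setIntegral_congr_fun hΩ.measurableSet fun x hx => ?_
      show (r⁻¹ * ‖gradient γ (y x)‖) ^ q
        = r⁻¹ ^ q * ‖gradient γ (r⁻¹ • (x - x₀))‖ ^ q
      rw [Real.mul_rpow (by positivity) (norm_nonneg _)]
    rw [e1, stmt11_cov (fun z => ‖gradient γ z‖ ^ q)
      (fun z hz => by show ‖gradient γ z‖ ^ q = 0; rw [hgradγ0 z hz, norm_zero, Real.zero_rpow hq0']) Ω hΩ x₀ r hr hball]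
    rw [Real.mul_rpow (by positivity) (by positivity),
      Real.mul_rpow (by positivity) hC0, hrd_pow]
    have h1 : (r⁻¹ ^ q) ^ (1/q) = r ^ (-1:ℝ) := by
      rw [← Real.rpow_mul (by positivity), mul_one_div, div_self hq0', Real.rpow_one,
        Real.rpow_neg_one]
    rw [h1, ← mul_assoc, ← Real.rpow_add hr]
  have hBeq : (∫ x in Ω, B x ^ q) ^ (1/q)
      = (r ^ ((d:ℝ)/q) / q) * M
        * (∫ z in Metric.ball (0:EuclideanSpace ℝ (Fin d)) 1, |γ z| ^ q) ^ (1/q) := by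
    have e1 : ∫ x in Ω, B x ^ q
        = (M/q) ^ q * ∫ x in Ω, (fun z => |γ z| ^ q) (r⁻¹ • (x - x₀)) := by
      rw [← integral_const_mul]
      refine setIntegral_congr_fun hΩ.measurableSet fun x hx => ?_
      show (M/q * |γ (y x)|) ^ q = (M/q) ^ q * |γ (r⁻¹ • (x - x₀))| ^ q
      rw [Real.mul_rpow (by positivity) (abs_nonneg _)]
    rw [e1, stmt11_cov (fun z => |γ z| ^ q)
      (fun z hz => by show |γ z| ^ q = 0; rw [hγ0 z hz, abs_zero, Real.zero_rpow hq0'])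
      Ω hΩ x₀ r hr hball]
    rw [Real.mul_rpow (by positivity) (by positivity),
      Real.mul_rpow (by positivity) hA0, hrd_pow]
    have h1 : ((M/q) ^ q) ^ (1/q) = M/q := by
      rw [← Real.rpow_mul (by positivity), mul_one_div, div_self hq0', Real.rpow_one]
    rw [h1]
    ring
  calc (∫ x in Ω, ‖gradient u x‖ ^ q * p x) ^ (1/q)
      ≤ (∫ x in Ω, A x ^ q) ^ (1/q) + (∫ x in Ω, B x ^ q) ^ (1/q) := le_trans hb2 hb3
    _ = _ := by rw [hAeq, hBeq]
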